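/- Let l, b₀, c₀, M₁₀, M₂₀ be real constants with l ≠ 0, b₀ ≠ 0, and l ≠ b₀, and let M(t) = (M₁₀cos(b₀t)+M₂₀sin(b₀t), M₂₀cos(b₀t)−M₁₀sin(b₀t)). Then the explicit functions X₁(t) = X₁(0)+V₂(0)/l+c₀M₁₀/(b₀l) + (V₁(0)/l − c₀M₂₀/(l(b₀−l)))sin(lt) − (V₂(0)/l + c₀M₁₀/(l(b₀−l)))cos(lt) + c₀M₂₀/(b₀(b₀−l))·sin(b₀t) + c₀M₁₀/(b₀(b₀−l))·cos(b₀t) and X₂(t) = X₂(0)−V₁(0)/l+c₀M₂₀/(b₀l) + (V₂(0)/l + c₀M₁₀/(l(b₀−l)))sin(lt) + (V₁(0)/l − c₀M₂₀/(l(b₀−l)))cos(lt) − c₀M₁₀/(b₀(b₀−l))·sin(b₀t) + c₀M₂₀/(b₀(b₀−l))·cos(b₀t) solve the ODE system Ẍ(t) + l·L·Ẋ(t) + c₀M(t) = 0 with Ẋ(0) = (V₁(0),V₂(0)), where L is the rotation matrix with rows (0,−1),(1,0). -/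

import Mathlib

open Real

/-- First component of the explicit trajectory. -/
noncomputable def X1sol (l b₀ c₀ M₁₀ M₂₀ X10 V1 V2 : ℝ) (t : ℝ) : ℝ :=
  X10 + V2 / l + c₀ * M₁₀ / (b₀ * l)
  + (V1 / l - c₀ * M₂₀ / (l * (b₀ - l))) * Real.sin (l * t)
  - (V2 / l + c₀ * M₁₀ / (l * (b₀ - l))) * Real.cos (l * t)
  + c₀ * M₂₀ / (b₀ * (b₀ - l)) * Real.sin (b₀ * t)
  + c₀ * M₁₀ / (b₀ * (b₀ - l)) * Real.cos (b₀ * t)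

/-- Second component of the explicit trajectory. -/
noncomputable def X2sol (l b₀ c₀ M₁₀ M₂₀ X20 V1 V2 : ℝ) (t : ℝ) : ℝ :=
  X20 - V1 / l + c₀ * M₂₀ / (b₀ * l)
  + (V2 / l + c₀ * M₁₀ / (l * (b₀ - l))) * Real.sin (l * t)
  + (V1 / l - c₀ * M₂₀ / (l * (b₀ - l))) * Real.cos (l * t)
  - c₀ * M₁₀ / (b₀ * (b₀ - l)) * Real.sin (b₀ * t)
  + c₀ * M₂₀ / (b₀ * (b₀ - l)) * Real.cos (b₀ * t)


lemma trig_hd (K a b c d ω₁ ω₂ t : ℝ) :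
    HasDerivAt (fun t => K + a * Real.sin (ω₁ * t) + b * Real.cos (ω₁ * t)
        + c * Real.sin (ω₂ * t) + d * Real.cos (ω₂ * t))
      (a * ω₁ * Real.cos (ω₁ * t) - b * ω₁ * Real.sin (ω₁ * t)
        + c * ω₂ * Real.cos (ω₂ * t) - d * ω₂ * Real.sin (ω₂ * t)) t := by
  have h1 : HasDerivAt (fun t : ℝ => ω₁ * t) ω₁ t := by
    simpa using (hasDerivAt_id t).const_mul ω₁
  have h2 : HasDerivAt (fun t : ℝ => ω₂ * t) ω₂ t := by
    simpa using (hasDerivAt_id t).const_mul ω₂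
  have hs1 := ((Real.hasDerivAt_sin (ω₁ * t)).comp t h1).const_mul a
  have hc1 := ((Real.hasDerivAt_cos (ω₁ * t)).comp t h1).const_mul b
  have hs2 := ((Real.hasDerivAt_sin (ω₂ * t)).comp t h2).const_mul c
  have hc2 := ((Real.hasDerivAt_cos (ω₂ * t)).comp t h2).const_mul d
  have := (((hs1.add hc1).add hs2).add hc2).const_add K
  refine HasDerivAt.congr_deriv (this.congr_of_eventuallyEq (Filter.Eventually.of_forall ?_)) ?_
  · intro x; simp [Function.comp]; ring
  · ring


set_option maxHeartbeats 2000000 in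
theorem explicit_trajectory_solves_ODE
    (l b₀ c₀ M₁₀ M₂₀ X10 X20 V1 V2 : ℝ)
    (hl : l ≠ 0) (hb : b₀ ≠ 0) (hlb : l ≠ b₀) :
    (∀ t : ℝ,
      deriv (deriv (X1sol l b₀ c₀ M₁₀ M₂₀ X10 V1 V2)) t
        - l * deriv (X2sol l b₀ c₀ M₁₀ M₂₀ X20 V1 V2) t
        + c₀ * (M₁₀ * Real.cos (b₀ * t) + M₂₀ * Real.sin (b₀ * t)) = 0 ∧
      deriv (deriv (X2sol l b₀ c₀ M₁₀ M₂₀ X20 V1 V2)) t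
        + l * deriv (X1sol l b₀ c₀ M₁₀ M₂₀ X10 V1 V2) t
        + c₀ * (M₂₀ * Real.cos (b₀ * t) - M₁₀ * Real.sin (b₀ * t)) = 0) ∧
    deriv (X1sol l b₀ c₀ M₁₀ M₂₀ X10 V1 V2) 0 = V1 ∧
    deriv (X2sol l b₀ c₀ M₁₀ M₂₀ X20 V1 V2) 0 = V2 := by
  have hbl : b₀ - l ≠ 0 := sub_ne_zero.mpr (Ne.symm hlb)
  have hX1 : ∀ t : ℝ, HasDerivAt (X1sol l b₀ c₀ M₁₀ M₂₀ X10 V1 V2)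
      ((V1 / l - c₀ * M₂₀ / (l * (b₀ - l))) * l * Real.cos (l * t) - (-(V2 / l + c₀ * M₁₀ / (l * (b₀ - l)))) * l * Real.sin (l * t) + (c₀ * M₂₀ / (b₀ * (b₀ - l))) * b₀ * Real.cos (b₀ * t) - (c₀ * M₁₀ / (b₀ * (b₀ - l))) * b₀ * Real.sin (b₀ * t)) t := by
    intro t
    have h := trig_hd (X10 + V2 / l + c₀ * M₁₀ / (b₀ * l)) (V1 / l - c₀ * M₂₀ / (l * (b₀ - l))) (-(V2 / l + c₀ * M₁₀ / (l * (b₀ - l)))) (c₀ * M₂₀ / (b₀ * (b₀ - l))) (c₀ * M₁₀ / (b₀ * (b₀ - l))) l b₀ t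
    convert h using 1
    funext x; simp [X1sol]; ring
  have hX2 : ∀ t : ℝ, HasDerivAt (X2sol l b₀ c₀ M₁₀ M₂₀ X20 V1 V2)
      ((V2 / l + c₀ * M₁₀ / (l * (b₀ - l))) * l * Real.cos (l * t) - (V1 / l - c₀ * M₂₀ / (l * (b₀ - l))) * l * Real.sin (l * t) + (-(c₀ * M₁₀ / (b₀ * (b₀ - l)))) * b₀ * Real.cos (b₀ * t) - (c₀ * M₂₀ / (b₀ * (b₀ - l))) * b₀ * Real.sin (b₀ * t)) t := by
    intro t
    have h := trig_hd (X20 - V1 / l + c₀ * M₂₀ / (b₀ * l)) (V2 / l + c₀ * M₁₀ / (l * (b₀ - l))) (V1 / l - c₀ * M₂₀ / (l * (b₀ - l))) (-(c₀ * M₁₀ / (b₀ * (b₀ - l)))) (c₀ * M₂₀ / (b₀ * (b₀ - l))) l b₀ t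
    convert h using 1
    funext x; simp [X2sol]; ring
  have hd1 : deriv (X1sol l b₀ c₀ M₁₀ M₂₀ X10 V1 V2)
      = fun t => (V1 / l - c₀ * M₂₀ / (l * (b₀ - l))) * l * Real.cos (l * t) - (-(V2 / l + c₀ * M₁₀ / (l * (b₀ - l)))) * l * Real.sin (l * t) + (c₀ * M₂₀ / (b₀ * (b₀ - l))) * b₀ * Real.cos (b₀ * t) - (c₀ * M₁₀ / (b₀ * (b₀ - l))) * b₀ * Real.sin (b₀ * t) := funext fun t => (hX1 t).deriv
  have hd2 : deriv (X2sol l b₀ c₀ M₁₀ M₂₀ X20 V1 V2)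
      = fun t => (V2 / l + c₀ * M₁₀ / (l * (b₀ - l))) * l * Real.cos (l * t) - (V1 / l - c₀ * M₂₀ / (l * (b₀ - l))) * l * Real.sin (l * t) + (-(c₀ * M₁₀ / (b₀ * (b₀ - l)))) * b₀ * Real.cos (b₀ * t) - (c₀ * M₂₀ / (b₀ * (b₀ - l))) * b₀ * Real.sin (b₀ * t) := funext fun t => (hX2 t).deriv
  have hX1' : ∀ t : ℝ, HasDerivAt (fun t => (V1 / l - c₀ * M₂₀ / (l * (b₀ - l))) * l * Real.cos (l * t) - (-(V2 / l + c₀ * M₁₀ / (l * (b₀ - l)))) * l * Real.sin (l * t) + (c₀ * M₂₀ / (b₀ * (b₀ - l))) * b₀ * Real.cos (b₀ * t) - (c₀ * M₁₀ / (b₀ * (b₀ - l))) * b₀ * Real.sin (b₀ * t))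
      (((V2 / l + c₀ * M₁₀ / (l * (b₀ - l))) * l) * l * Real.cos (l * t) - ((V1 / l - c₀ * M₂₀ / (l * (b₀ - l))) * l) * l * Real.sin (l * t) + (-((c₀ * M₁₀ / (b₀ * (b₀ - l))) * b₀)) * b₀ * Real.cos (b₀ * t) - ((c₀ * M₂₀ / (b₀ * (b₀ - l))) * b₀) * b₀ * Real.sin (b₀ * t)) t := by
    intro t
    have h := trig_hd 0 ((V2 / l + c₀ * M₁₀ / (l * (b₀ - l))) * l) ((V1 / l - c₀ * M₂₀ / (l * (b₀ - l))) * l) (-((c₀ * M₁₀ / (b₀ * (b₀ - l))) * b₀)) ((c₀ * M₂₀ / (b₀ * (b₀ - l))) * b₀) l b₀ t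
    convert h using 1
    funext x; ring
  have hX2' : ∀ t : ℝ, HasDerivAt (fun t => (V2 / l + c₀ * M₁₀ / (l * (b₀ - l))) * l * Real.cos (l * t) - (V1 / l - c₀ * M₂₀ / (l * (b₀ - l))) * l * Real.sin (l * t) + (-(c₀ * M₁₀ / (b₀ * (b₀ - l)))) * b₀ * Real.cos (b₀ * t) - (c₀ * M₂₀ / (b₀ * (b₀ - l))) * b₀ * Real.sin (b₀ * t))
      ((-((V1 / l - c₀ * M₂₀ / (l * (b₀ - l))) * l)) * l * Real.cos (l * t) - ((V2 / l + c₀ * M₁₀ / (l * (b₀ - l))) * l) * l * Real.sin (l * t) + (-((c₀ * M₂₀ / (b₀ * (b₀ - l))) * b₀)) * b₀ * Real.cos (b₀ * t) - (-((c₀ * M₁₀ / (b₀ * (b₀ - l))) * b₀)) * b₀ * Real.sin (b₀ * t)) t := by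
    intro t
    have h := trig_hd 0 (-((V1 / l - c₀ * M₂₀ / (l * (b₀ - l))) * l)) ((V2 / l + c₀ * M₁₀ / (l * (b₀ - l))) * l) (-((c₀ * M₂₀ / (b₀ * (b₀ - l))) * b₀)) (-((c₀ * M₁₀ / (b₀ * (b₀ - l))) * b₀)) l b₀ t
    convert h using 1
    funext x; ring
  refine ⟨fun t => ⟨?_, ?_⟩, ?_, ?_⟩
  · rw [hd1, (hX1' t).deriv, (hX2 t).deriv]
    field_simp
    ring
  · rw [hd2, (hX2' t).deriv, (hX1 t).deriv]
    field_simp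
    ring
  · rw [(hX1 0).deriv]
    simp only [mul_zero, Real.sin_zero, Real.cos_zero, mul_one]
    field_simp
    ring
  · rw [(hX2 0).deriv]
    simp only [mul_zero, Real.sin_zero, Real.cos_zero, mul_one]
    field_simp
    ring
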